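/- Asymptotics of the confluent hypergeometric function for large second parameter and fixed argument: fix real numbers a > 0, b, and z ∈ ℝ. For natural numbers n with b + n > a, define ₁F₁(a;b+n;z) := (Γ(b+n)/(Γ(a)Γ(b+n-a))) ∫₀¹ e^{z u} u^{a-1}(1-u)^{b+n-a-1} du. Then as n → ∞, ₁F₁(a;b+n;z) - 1 - a·z/n = O(n^{-2}); that is, there exist M > 0 and N₀ such that for all n ≥ N₀, |₁F₁(a;b+n;z) - 1 - a z/n| ≤ M·n^{-2}. -/

import Mathlib

open Real Filter Topology
open MeasureTheory intervalIntegral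

lemma cplx_eq {x y : ℝ} {u : ℝ} (h0 : 0 ≤ u) (h1 : u ≤ 1) :
    (u:ℂ) ^ ((x:ℂ) - 1) * (1 - (u:ℂ)) ^ ((y:ℂ) - 1)
      = ((u ^ (x-1) * (1-u) ^ (y-1) : ℝ) : ℂ) := by
  push_cast
  rw [Complex.ofReal_cpow h0, Complex.ofReal_cpow (by linarith)]
  push_cast
  ring

lemma betaReal_convergent {x y : ℝ} (hx : 0 < x) (hy : 0 < y) :
    IntervalIntegrable (fun u : ℝ => u ^ (x-1) * (1-u) ^ (y-1)) volume 0 1 := by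
  have h := (Complex.betaIntegral_convergent (u := x) (v := y) (by simpa) (by simpa)).norm
  apply h.congr
  intro u hu
  beta_reduce
  rw [Set.uIoc_of_le (by norm_num : (0:ℝ) ≤ 1)] at hu
  rw [cplx_eq hu.1.le hu.2, Complex.norm_real,
    Real.norm_of_nonneg (mul_nonneg (Real.rpow_nonneg hu.1.le _) (Real.rpow_nonneg (by linarith [hu.2]) _))]

lemma betaReal_eq {x y : ℝ} (hx : 0 < x) (hy : 0 < y) :
    ∫ u in (0:ℝ)..1, u ^ (x-1) * (1-u) ^ (y-1) = Gamma x * Gamma y / Gamma (x+y) := by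
  have h := Complex.Gamma_mul_Gamma_eq_betaIntegral (s := x) (t := y) (by simpa) (by simpa)
  have hbeta : Complex.betaIntegral x y = ((∫ u in (0:ℝ)..1, u ^ (x-1) * (1-u) ^ (y-1) : ℝ) : ℂ) := by
    rw [Complex.betaIntegral, ← intervalIntegral.integral_ofReal]
    apply intervalIntegral.integral_congr
    intro u hu
    rw [Set.uIcc_of_le (by norm_num : (0:ℝ) ≤ 1)] at hu
    exact cplx_eq hu.1 hu.2
  rw [hbeta] at h
  have h2 : ((Gamma x * Gamma y : ℝ) : ℂ) = ((Gamma (x+y) * ∫ u in (0:ℝ)..1, u ^ (x-1) * (1-u) ^ (y-1) : ℝ) : ℂ) := by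
    push_cast [← Complex.Gamma_ofReal]
    exact_mod_cast h
  have h3 := Complex.ofReal_inj.mp h2
  have hpos := Real.Gamma_pos_of_pos (by linarith : 0 < x + y)
  field_simp
  linarith [h3]

lemma exp_taylor_bound (t : ℝ) : |Real.exp t - 1 - t| ≤ t^2 * Real.exp |t| := by
  rcases le_or_gt 0 t with h | h
  · rw [abs_of_nonneg (by nlinarith [Real.add_one_le_exp t])]
    have key : Real.exp t - 1 - t = ∫ s in (0:ℝ)..t, (Real.exp s - 1) := by
      rw [intervalIntegral.integral_sub (Real.continuous_exp.intervalIntegrable 0 t)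
        intervalIntegrable_const, integral_exp, intervalIntegral.integral_const]
      simp [Real.exp_zero]
    have hb : ∀ s ∈ Set.Icc (0:ℝ) t, Real.exp s - 1 ≤ t * Real.exp t := by
      intro s hs
      have h1 : Real.exp s ≤ Real.exp t := Real.exp_le_exp.mpr hs.2
      have h2 : Real.exp t - 1 ≤ t * Real.exp t := by
        have h3 := mul_le_mul_of_nonneg_right (Real.add_one_le_exp (-t)) (Real.exp_pos t).le
        rw [← Real.exp_add] at h3
        simp at h3
        nlinarith
      linarith
    have := intervalIntegral.integral_mono_on (μ := volume) h
      ((Real.continuous_exp.intervalIntegrable 0 t).sub intervalIntegrable_const)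
      intervalIntegrable_const hb
    rw [intervalIntegral.integral_const, smul_eq_mul] at this
    rw [key, abs_of_nonneg h]
    calc (∫ s in (0:ℝ)..t, (Real.exp s - 1)) ≤ (t - 0) * (t * Real.exp t) := this
      _ = t^2 * Real.exp t := by ring
  · rw [abs_of_nonneg (by nlinarith [Real.add_one_le_exp t])]
    have key : Real.exp t - 1 - t = ∫ s in t..(0:ℝ), (1 - Real.exp s) := by
      rw [intervalIntegral.integral_sub intervalIntegrable_const
        (Real.continuous_exp.intervalIntegrable t 0), integral_exp, intervalIntegral.integral_const]
      simp [Real.exp_zero]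
      ring
    have hb : ∀ s ∈ Set.Icc t (0:ℝ), 1 - Real.exp s ≤ -s := by
      intro s hs
      nlinarith [Real.add_one_le_exp s]
    have := intervalIntegral.integral_mono_on (μ := volume) h.le
      (intervalIntegrable_const.sub (Real.continuous_exp.intervalIntegrable t 0))
      ((continuous_id.neg).intervalIntegrable t 0) hb
    have hid : (∫ s in t..(0:ℝ), -s) = t^2/2 := by
      rw [intervalIntegral.integral_neg, integral_id]; ring
    rw [key, abs_of_neg h]
    have h1 : (1:ℝ) ≤ Real.exp (-t) := by
      rw [Real.one_le_exp_iff]; linarith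
    simp only [Pi.neg_apply, id_eq] at this
    nlinarith [this, hid]


set_option maxHeartbeats 2000000 in
/-- Asymptotics of the confluent hypergeometric function for large second parameter
and fixed argument: for fixed `a > 0`, `b`, `z`, with
`₁F₁(a;b+n;z) := (Γ(b+n)/(Γ(a)Γ(b+n-a))) ∫₀¹ e^{z u} u^{a-1}(1-u)^{b+n-a-1} du`,
as `n → ∞`, `₁F₁(a;b+n;z) - 1 - a z/n = O(n^{-2})`. -/
theorem hyp1F1_asymptotic_large_b (a b z : ℝ) (ha : 0 < a) :
    ∃ M > (0:ℝ), ∃ N₀ : ℕ, ∀ n : ℕ, N₀ ≤ n →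
      |(Real.Gamma (b + n) / (Real.Gamma a * Real.Gamma (b + n - a))) *
            (∫ u in (0:ℝ)..1, Real.exp (z * u) * u ^ (a - 1) * (1 - u) ^ (b + n - a - 1)) -
          1 - a * z / n| ≤
        M * (n : ℝ) ^ (-2 : ℝ) := by
  set c := z^2 * Real.exp |z| with hc
  have hc0 : 0 ≤ c := by positivity
  refine ⟨4*c*a*(a+1) + 2*|a*z*b| + 1, by positivity, ⌈2*(|a|+|b|+1)⌉₊ + 2, fun n hn => ?_⟩
  have hn2 : 2*(|a|+|b|+1) + 2 ≤ (n:ℝ) := by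
    have h1 : (⌈2*(|a|+|b|+1)⌉₊ : ℝ) + 2 ≤ (n:ℝ) := by exact_mod_cast Nat.cast_le.mpr hn
    have h2 := Nat.le_ceil (2*(|a|+|b|+1))
    linarith
  have habs1 := abs_nonneg a
  have habs2 := abs_nonneg b
  have hn0 : (0:ℝ) < n := by nlinarith
  set w := b + (n:ℝ) - a with hwdef
  have hBw : b + (n:ℝ) = a + w := by rw [hwdef]; ring
  have hBn : (n:ℝ)/2 ≤ a + w := by
    have h3 := neg_abs_le b
    have h4 := neg_abs_le a
    rw [hwdef]; nlinarith
  have hB0 : 0 < a + w := lt_of_lt_of_le (by positivity) hBn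
  have hw0 : 0 < w := by
    have h3 := neg_abs_le b
    have h4 := le_abs_self a
    rw [hwdef]; nlinarith
  -- Gamma positivity
  have hGa := Real.Gamma_pos_of_pos ha
  have hGw := Real.Gamma_pos_of_pos hw0
  have hGB := Real.Gamma_pos_of_pos hB0
  -- integrability setup
  set f : ℝ → ℝ := fun u => u ^ (a-1) * (1-u) ^ (w-1) with hfdef
  have hf : IntervalIntegrable f volume 0 1 := betaReal_convergent ha hw0
  have hcontE : ContinuousOn (fun u : ℝ => Real.exp (z*u)) (Set.uIcc 0 1) :=
    (Real.continuous_exp.comp (continuous_const.mul continuous_id)).continuousOn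
  have hcontzu : ContinuousOn (fun u : ℝ => z*u) (Set.uIcc 0 1) :=
    (continuous_const.mul continuous_id).continuousOn
  have hEf : IntervalIntegrable (fun u => Real.exp (z*u) * f u) volume 0 1 :=
    hf.continuousOn_mul hcontE
  have huf : IntervalIntegrable (fun u => (z*u) * f u) volume 0 1 :=
    hf.continuousOn_mul hcontzu
  set g : ℝ → ℝ := fun u => (Real.exp (z*u) - 1 - z*u) * f u with hgdef
  have hg : IntervalIntegrable g volume 0 1 := by
    have h := (hEf.sub hf).sub huf
    apply h.congr
    intro u _
    simp only [hgdef, Pi.sub_apply]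
    ring
  -- beta values
  have J0 := betaReal_eq ha hw0
  have J1 := betaReal_eq (by linarith : (0:ℝ) < a+1) hw0
  have J2 := betaReal_eq (by linarith : (0:ℝ) < a+2) hw0
  -- Gamma recurrences
  have hGa1 : Real.Gamma (a+1) = a * Real.Gamma a := Real.Gamma_add_one ha.ne'
  have hGa2 : Real.Gamma (a+2) = (a+1) * (a * Real.Gamma a) := by
    rw [show a+2 = (a+1)+1 by ring, Real.Gamma_add_one (by linarith), hGa1]
  have hGB1 : Real.Gamma (a+1+w) = (a+w) * Real.Gamma (a+w) := by
    rw [show a+1+w = (a+w)+1 by ring, Real.Gamma_add_one hB0.ne']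
  have hGB2 : Real.Gamma (a+2+w) = (a+w+1) * ((a+w) * Real.Gamma (a+w)) := by
    rw [show a+2+w = (a+1+w)+1 by ring, Real.Gamma_add_one (by linarith), hGB1]
    ring
  -- pointwise identity  u * f u = u^((a+1)-1) (1-u)^(w-1)
  have hpt1 : ∀ u ∈ Set.uIcc (0:ℝ) 1, u * f u = u ^ (a+1-1) * (1-u) ^ (w-1) := by
    intro u hu
    rw [Set.uIcc_of_le (by norm_num : (0:ℝ) ≤ 1)] at hu
    rcases eq_or_lt_of_le hu.1 with h0 | h0
    · rw [← h0]
      simp only [hfdef]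
      rw [Real.zero_rpow (by linarith : a+1-1 ≠ 0)]
      simp
    · simp only [hfdef]
      rw [← mul_assoc, show u * u ^ (a-1) = u ^ (1:ℝ) * u ^ (a-1) by rw [Real.rpow_one],
        ← Real.rpow_add h0]
      norm_num
  -- split the integral
  have hsplit : (∫ u in (0:ℝ)..1, Real.exp (z * u) * u ^ (a - 1) * (1 - u) ^ (w - 1))
      = (∫ u in (0:ℝ)..1, u ^ (a-1) * (1-u) ^ (w-1))
        + z * (∫ u in (0:ℝ)..1, u ^ (a+1-1) * (1-u) ^ (w-1))
        + ∫ u in (0:ℝ)..1, g u := by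
    have hL : (∫ u in (0:ℝ)..1, Real.exp (z * u) * u ^ (a - 1) * (1 - u) ^ (w - 1))
        = ∫ u in (0:ℝ)..1, Real.exp (z*u) * f u := by
      apply intervalIntegral.integral_congr
      intro u _
      simp only [hfdef]; ring
    have hM : z * (∫ u in (0:ℝ)..1, u ^ (a+1-1) * (1-u) ^ (w-1))
        = ∫ u in (0:ℝ)..1, (z*u) * f u := by
      rw [show (∫ u in (0:ℝ)..1, u ^ (a+1-1) * (1-u) ^ (w-1)) = ∫ u in (0:ℝ)..1, u * f u from
        (intervalIntegral.integral_congr hpt1).symm, ← intervalIntegral.integral_const_mul]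
      apply intervalIntegral.integral_congr
      intro u _
      ring
    rw [hL, hM]
    rw [show (∫ u in (0:ℝ)..1, g u)
        = (∫ u in (0:ℝ)..1, Real.exp (z*u) * f u) - (∫ u in (0:ℝ)..1, f u)
          - (∫ u in (0:ℝ)..1, (z*u) * f u) from by
      rw [← intervalIntegral.integral_sub hEf hf, ← intervalIntegral.integral_sub (hEf.sub hf) huf]
      apply intervalIntegral.integral_congr
      intro u _
      simp only [hgdef]; ring]
    simp only [hfdef]
    ring
  -- bound on the remainder integral
  have hgbd : |∫ u in (0:ℝ)..1, g u| ≤ c * (∫ u in (0:ℝ)..1, u ^ (a+2-1) * (1-u) ^ (w-1)) := by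
    have h1 := intervalIntegral.abs_integral_le_integral_abs (f := g) (μ := volume)
      (by norm_num : (0:ℝ) ≤ 1)
    have hbint : IntervalIntegrable (fun u : ℝ => c * (u ^ (a+2-1) * (1-u) ^ (w-1))) volume 0 1 :=
      (betaReal_convergent (by linarith : (0:ℝ) < a+2) hw0).const_mul c
    have h2 : (∫ u in (0:ℝ)..1, |g u|)
        ≤ ∫ u in (0:ℝ)..1, c * (u ^ (a+2-1) * (1-u) ^ (w-1)) := by
      apply intervalIntegral.integral_mono_on (μ := volume) (by norm_num : (0:ℝ) ≤ 1) hg.abs hbint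
      intro u hu
      have hu0 := hu.1
      have hu1 := hu.2
      have hf0 : 0 ≤ u ^ (a-1) := Real.rpow_nonneg hu0 _
      have hf1 : 0 ≤ (1-u) ^ (w-1) := Real.rpow_nonneg (by linarith) _
      rcases eq_or_lt_of_le hu0 with h0 | h0
      · rw [← h0]
        simp only [hgdef, hfdef]
        rw [Real.zero_rpow (by linarith : a+2-1 ≠ 0)]
        simp
      · have hexp := exp_taylor_bound (z*u)
        have hexp2 : |Real.exp (z*u) - 1 - z*u| ≤ c * u^2 := by
          have hzu : |z*u| ≤ |z| := by
            rw [abs_mul, abs_of_nonneg hu0]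
            nlinarith [abs_nonneg z]
          have hee := Real.exp_le_exp.mpr hzu
          calc |Real.exp (z*u) - 1 - z*u| ≤ (z*u)^2 * Real.exp |z*u| := hexp
            _ ≤ (z*u)^2 * Real.exp |z| := by nlinarith [sq_nonneg (z*u)]
            _ = c * u^2 := by rw [hc]; ring
        have hu2 : u^2 * u^(a-1) = u^(a+2-1) := by
          rw [← Real.rpow_natCast u 2, ← Real.rpow_add h0]
          norm_num
          congr 1
          ring
        calc |g u| = |Real.exp (z*u) - 1 - z*u| * (u ^ (a-1) * (1-u) ^ (w-1)) := by
              simp only [hgdef, hfdef]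
              rw [abs_mul, abs_of_nonneg (mul_nonneg hf0 hf1)]
          _ ≤ (c * u^2) * (u ^ (a-1) * (1-u) ^ (w-1)) :=
              mul_le_mul_of_nonneg_right hexp2 (mul_nonneg hf0 hf1)
          _ = c * (u^2 * u^(a-1) * (1-u)^(w-1)) := by ring
          _ = c * (u ^ (a+2-1) * (1-u) ^ (w-1)) := by rw [hu2]
    rw [intervalIntegral.integral_const_mul] at h2
    exact le_trans h1 h2
  -- now assemble
  rw [hBw]
  set C := Real.Gamma (a+w) / (Real.Gamma a * Real.Gamma w) with hCdef
  have hC0 : 0 < C := by positivity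
  clear_value c w f g C
  rw [hsplit]
  have e0 : C * (∫ u in (0:ℝ)..1, u ^ (a-1) * (1-u) ^ (w-1)) = 1 := by
    rw [J0, hCdef]; field_simp
  have e1 : C * (∫ u in (0:ℝ)..1, u ^ (a+1-1) * (1-u) ^ (w-1)) = a / (a+w) := by
    rw [J1, hCdef, hGa1, hGB1]
    field_simp [hGa.ne', hGw.ne', hGB.ne', hB0.ne']
  have e2 : C * (∫ u in (0:ℝ)..1, u ^ (a+2-1) * (1-u) ^ (w-1))
      = a * (a+1) / ((a+w) * (a+w+1)) := by
    rw [J2, hCdef, hGa2, hGB2]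
    field_simp [hGa.ne', hGw.ne', hGB.ne', hB0.ne']
  have key : C * ((∫ u in (0:ℝ)..1, u ^ (a-1) * (1-u) ^ (w-1))
        + z * (∫ u in (0:ℝ)..1, u ^ (a+1-1) * (1-u) ^ (w-1))
        + ∫ u in (0:ℝ)..1, g u) - 1 - a * z / n
      = (z * (a/(a+w)) - a*z/n) + C * (∫ u in (0:ℝ)..1, g u) := by
    have hexpand : C * ((∫ u in (0:ℝ)..1, u ^ (a-1) * (1-u) ^ (w-1))
        + z * (∫ u in (0:ℝ)..1, u ^ (a+1-1) * (1-u) ^ (w-1))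
        + ∫ u in (0:ℝ)..1, g u)
      = C * (∫ u in (0:ℝ)..1, u ^ (a-1) * (1-u) ^ (w-1))
        + z * (C * (∫ u in (0:ℝ)..1, u ^ (a+1-1) * (1-u) ^ (w-1)))
        + C * (∫ u in (0:ℝ)..1, g u) := by ring
    rw [hexpand, e0, e1]
    ring
  rw [key]
  -- final bounds
  have h1 : |z * (a/(a+w)) - a*z/n| ≤ 2*|a*z*b| / (n:ℝ)^2 := by
    have heq : z * (a/(a+w)) - a*z/n = -(a*z*b) / ((a+w) * n) := by
      have hBne : (a+w) ≠ 0 := hB0.ne'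
      have hnne : ((n:ℝ)) ≠ 0 := hn0.ne'
      field_simp
      rw [hwdef]
      ring
    rw [heq, abs_div, abs_neg, abs_of_pos (mul_pos hB0 hn0)]
    rw [div_le_div_iff₀ (mul_pos hB0 hn0) (by positivity)]
    have hmul := mul_le_mul_of_nonneg_right hBn hn0.le
    nlinarith [mul_le_mul_of_nonneg_left hmul (abs_nonneg (a*z*b))]
  have h2 : C * |∫ u in (0:ℝ)..1, g u| ≤ 4*c*a*(a+1) / (n:ℝ)^2 := by
    have hP : (n:ℝ)/2 * ((n:ℝ)/2) ≤ (a+w) * (a+w+1) :=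
      mul_le_mul hBn (by linarith) (by positivity) hB0.le
    calc C * |∫ u in (0:ℝ)..1, g u|
        ≤ C * (c * (∫ u in (0:ℝ)..1, u ^ (a+2-1) * (1-u) ^ (w-1))) :=
          mul_le_mul_of_nonneg_left hgbd hC0.le
      _ = c * (C * (∫ u in (0:ℝ)..1, u ^ (a+2-1) * (1-u) ^ (w-1))) := by ring
      _ = c * (a * (a+1) / ((a+w) * (a+w+1))) := by rw [e2]
      _ ≤ 4*c*a*(a+1) / (n:ℝ)^2 := by
          have hPP : (0:ℝ) < (a+w)*(a+w+1) := mul_pos hB0 (by linarith)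
          rw [← mul_div_assoc, div_le_div_iff₀ hPP (by positivity)]
          have hKn : (0:ℝ) ≤ c*(a*(a+1)) := mul_nonneg hc0 (by nlinarith)
          have h4P : (n:ℝ)^2 ≤ 4*((a+w)*(a+w+1)) := by nlinarith [hP]
          nlinarith [mul_le_mul_of_nonneg_left h4P hKn]
  have hrpow : (n:ℝ)^(-2:ℝ) = ((n:ℝ)^2)⁻¹ := by
    rw [show (-2:ℝ) = -((2:ℕ):ℝ) by norm_num, Real.rpow_neg hn0.le, Real.rpow_natCast]
  rw [hrpow]
  have habs : |(z * (a/(a+w)) - a*z/(n:ℝ)) + C * (∫ u in (0:ℝ)..1, g u)|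
      ≤ |z * (a/(a+w)) - a*z/(n:ℝ)| + C * |∫ u in (0:ℝ)..1, g u| := by
    calc |(z * (a/(a+w)) - a*z/(n:ℝ)) + C * (∫ u in (0:ℝ)..1, g u)|
        ≤ |z * (a/(a+w)) - a*z/(n:ℝ)| + |C * (∫ u in (0:ℝ)..1, g u)| := abs_add_le _ _
      _ = |z * (a/(a+w)) - a*z/(n:ℝ)| + C * |∫ u in (0:ℝ)..1, g u| := by
          rw [abs_mul, abs_of_pos hC0]
  have hfin : 2*|a*z*b| / (n:ℝ)^2 + 4*c*a*(a+1) / (n:ℝ)^2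
      ≤ (4*c*a*(a+1) + 2*|a*z*b| + 1) * ((n:ℝ)^2)⁻¹ := by
    have hpos : (0:ℝ) < (n:ℝ)^2 := by positivity
    have he : 2*|a*z*b| / (n:ℝ)^2 + 4*c*a*(a+1) / (n:ℝ)^2
        = (2*|a*z*b| + 4*c*a*(a+1)) * ((n:ℝ)^2)⁻¹ := by ring
    rw [he]
    exact mul_le_mul_of_nonneg_right (by linarith) (inv_nonneg.mpr hpos.le)
  linarith [habs, h1, h2, hfin]
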